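/- Fix M > 0 and b > 0. For all Borel probability measures μ and ν on [0,M] and every x ∈ [0,M]: (i) |S(x,μ) − S(x,ν)| ≤ (x + b)·d_K(μ,ν), and in particular |S(x,μ) − S(x,ν)| ≤ (M + b)·d_K(μ,ν); (ii) |S(x,μ) − S(x,ν)| ≤ b + d_W(μ,ν). -/

import Mathlib

open MeasureTheory

noncomputable section

/-- Cumulative distribution function `F(t) = μ([0,t])`. -/
def cdf0 (μ : Measure ℝ) (t : ℝ) : ℝ := (μ (Set.Icc 0 t)).toReal

/-- Wasserstein-1 distance between measures on `[0,M]`: `∫₀^M |F(t) - H(t)| dt`. -/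
def wassDist (M : ℝ) (μ ν : Measure ℝ) : ℝ :=
  ∫ t in Set.Icc (0:ℝ) M, |cdf0 μ t - cdf0 ν t|

/-- Kolmogorov distance: `sup_{t ∈ ℝ} |F(t) - H(t)|`. -/
def kolDist (μ ν : Measure ℝ) : ℝ := ⨆ t : ℝ, |cdf0 μ t - cdf0 ν t|

/-- Expected ski-rental cost with buying cost `b`. -/
def skiCost (b x : ℝ) (μ : Measure ℝ) : ℝ :=
  ∫ ξ, (if ξ ≤ x then ξ else b + x) ∂μ

namespace SkiAux

open Set

lemma cdf0_nonneg (μ : Measure ℝ) (t : ℝ) : 0 ≤ cdf0 μ t := ENNReal.toReal_nonneg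

lemma cdf0_le_one (μ : Measure ℝ) [IsProbabilityMeasure μ] (t : ℝ) : cdf0 μ t ≤ 1 := by
  have h : μ (Set.Icc 0 t) ≤ 1 := prob_le_one
  have := ENNReal.toReal_mono (by simp) h
  simpa [cdf0] using this

lemma cdf0_mono (μ : Measure ℝ) [IsProbabilityMeasure μ] : Monotone (cdf0 μ) := by
  intro s t hst
  exact ENNReal.toReal_mono (measure_ne_top μ _)
    (measure_mono (Set.Icc_subset_Icc_right hst))

lemma cdf0_measurable (μ : Measure ℝ) [IsProbabilityMeasure μ] : Measurable (cdf0 μ) :=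
  (cdf0_mono μ).measurable

lemma abs_cdf0_sub_le_one (μ ν : Measure ℝ) [IsProbabilityMeasure μ] [IsProbabilityMeasure ν]
    (t : ℝ) : |cdf0 μ t - cdf0 ν t| ≤ 1 := by
  rw [abs_sub_le_iff]
  constructor <;> linarith [cdf0_nonneg μ t, cdf0_le_one μ t, cdf0_nonneg ν t, cdf0_le_one ν t]

lemma kol_bdd (μ ν : Measure ℝ) [IsProbabilityMeasure μ] [IsProbabilityMeasure ν] :
    BddAbove (Set.range fun t => |cdf0 μ t - cdf0 ν t|) := by
  refine ⟨1, ?_⟩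
  rintro r ⟨t, rfl⟩
  exact abs_cdf0_sub_le_one μ ν t

lemma le_kolDist (μ ν : Measure ℝ) [IsProbabilityMeasure μ] [IsProbabilityMeasure ν] (t : ℝ) :
    |cdf0 μ t - cdf0 ν t| ≤ kolDist μ ν :=
  le_ciSup (kol_bdd μ ν) t

lemma kolDist_nonneg (μ ν : Measure ℝ) [IsProbabilityMeasure μ] [IsProbabilityMeasure ν] :
    0 ≤ kolDist μ ν :=
  (abs_nonneg _).trans (le_kolDist μ ν 0)

lemma measure_Iic_eq (M : ℝ) (μ : Measure ℝ) [IsProbabilityMeasure μ]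
    (hμ : μ (Set.Icc 0 M) = 1) {t : ℝ} (ht0 : 0 ≤ t) (htM : t ≤ M) :
    μ (Set.Iic t) = μ (Set.Icc 0 t) := by
  have hnull : μ (Set.Icc (0:ℝ) M)ᶜ = 0 := by
    rw [prob_compl_eq_zero_iff measurableSet_Icc]; exact hμ
  rw [← measure_inter_conull hnull]
  congr 1
  ext a
  simp only [Set.mem_inter_iff, Set.mem_Iic, Set.mem_Icc]
  constructor
  · rintro ⟨h1, h2, h3⟩; exact ⟨h2, h1⟩
  · rintro ⟨h1, h2⟩; exact ⟨h2, h1, h2.trans htM⟩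

/-- Representation of the ski-rental cost via the cdf. -/
lemma ski_repr (M b x : ℝ) (hb : 0 < b) (hx0 : 0 ≤ x) (hxM : x ≤ M)
    (μ : Measure ℝ) [IsProbabilityMeasure μ] (hμ : μ (Set.Icc 0 M) = 1) :
    skiCost b x μ = (b + x) - (b * cdf0 μ x + ∫ t in Set.Ioc (0:ℝ) x, cdf0 μ t) := by
  have hnull : μ (Set.Icc (0:ℝ) M)ᶜ = 0 := by
    rw [prob_compl_eq_zero_iff measurableSet_Icc]; exact hμ
  have hae : ∀ᵐ ξ ∂μ, ξ ∈ Set.Icc (0:ℝ) M := by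
    rw [ae_iff]
    convert hnull using 2
    rfl
  set g : ℝ → ℝ := fun ξ => if ξ ≤ x then b + x - ξ else 0 with hg_def
  have hg_meas : Measurable g := by
    apply Measurable.ite (measurableSet_le measurable_id measurable_const) <;> fun_prop
  have hg_int : Integrable g μ := by
    refine Integrable.mono' (integrable_const (b + x)) hg_meas.aestronglyMeasurable ?_
    filter_upwards [hae] with ξ hξ
    rcases hξ with ⟨h0, hM'⟩
    by_cases h : ξ ≤ x <;> simp only [hg_def, h, if_true, if_false] <;>
      rw [Real.norm_eq_abs, abs_of_nonneg (by linarith)] <;> linarith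
  -- f = (b+x) - g
  have hstep1 : skiCost b x μ = (b + x) - ∫ ξ, g ξ ∂μ := by
    have : (fun ξ : ℝ => if ξ ≤ x then ξ else b + x) = fun ξ => (b + x) - g ξ := by
      funext ξ; by_cases h : ξ ≤ x <;> simp [hg_def, h]
    rw [skiCost, this, integral_sub (integrable_const _) hg_int, integral_const]
    simp
  -- layered representation of g
  set F : ℝ × ℝ → ℝ := fun p => if p.1 ≤ p.2 then 1 else 0 with hF_def
  have hIocFin : IsFiniteMeasure (volume.restrict (Set.Ioc (0:ℝ) x)) := by
    constructor
    rw [Measure.restrict_apply_univ, Real.volume_Ioc]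
    exact ENNReal.ofReal_lt_top
  have hF_meas : Measurable F := by
    apply Measurable.ite (measurableSet_le measurable_fst measurable_snd) <;> fun_prop
  have hF_int : Integrable F (μ.prod (volume.restrict (Set.Ioc (0:ℝ) x))) := by
    refine Integrable.mono' (integrable_const 1) hF_meas.aestronglyMeasurable ?_
    filter_upwards with p
    by_cases h : p.1 ≤ p.2 <;> simp [hF_def, h]
  have hinner : ∀ ξ ∈ Set.Icc (0:ℝ) M,
      (∫ t in Set.Ioc (0:ℝ) x, F (ξ, t)) = if ξ ≤ x then x - ξ else 0 := by
    intro ξ hξ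
    rcases hξ with ⟨h0, hM'⟩
    by_cases h : ξ ≤ x
    · have hset : (fun t => F (ξ, t)) = Set.indicator (Set.Ici ξ) (fun _ => (1:ℝ)) := by
        funext t
        by_cases ht : ξ ≤ t <;> simp [hF_def, Set.indicator_apply, ht]
      rw [hset, integral_indicator measurableSet_Ici]
      rw [Measure.restrict_restrict measurableSet_Ici, setIntegral_const, smul_eq_mul, mul_one]
      have hle : volume (Set.Ici ξ ∩ Set.Ioc 0 x) ≤ ENNReal.ofReal (x - ξ) := by
        rw [← Real.volume_Icc (a := ξ) (b := x)]
        refine measure_mono ?_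
        rintro t ⟨ht1, _, ht3⟩; exact ⟨ht1, ht3⟩
      have hge : ENNReal.ofReal (x - ξ) ≤ volume (Set.Ici ξ ∩ Set.Ioc 0 x) := by
        rw [← Real.volume_Ioc (a := ξ) (b := x)]
        refine measure_mono ?_
        rintro t ⟨ht1, ht2⟩; exact ⟨ht1.le, lt_of_le_of_lt h0 ht1, ht2⟩
      rw [if_pos h, measureReal_def, le_antisymm hle hge, ENNReal.toReal_ofReal (by linarith)]
    · rw [if_neg h]
      have hz : ∀ t ∈ Set.Ioc (0:ℝ) x, F (ξ, t) = 0 := by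
        intro t ht
        have : ¬ ξ ≤ t := by push_neg at h ⊢; exact lt_of_le_of_lt ht.2 h
        simp [hF_def, this]
      rw [setIntegral_congr_fun measurableSet_Ioc hz, integral_zero]
  have hg_eq : g =ᵐ[μ] fun ξ =>
      b * Set.indicator (Set.Iic x) (fun _ => (1:ℝ)) ξ + ∫ t in Set.Ioc (0:ℝ) x, F (ξ, t) := by
    filter_upwards [hae] with ξ hξ
    rw [hinner ξ hξ]
    rcases hξ with ⟨h0, hM'⟩
    by_cases h : ξ ≤ x <;> simp [hg_def, Set.indicator_apply, h] <;> ring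
  have hind_int : Integrable (fun ξ => b * Set.indicator (Set.Iic x) (fun _ => (1:ℝ)) ξ) μ :=
    ((integrable_const (1:ℝ)).indicator measurableSet_Iic).const_mul b
  have hF2_int : Integrable (fun ξ => ∫ t in Set.Ioc (0:ℝ) x, F (ξ, t)) μ :=
    hF_int.integral_prod_left
  have hgval : ∫ ξ, g ξ ∂μ = b * cdf0 μ x + ∫ t in Set.Ioc (0:ℝ) x, cdf0 μ t := by
    rw [integral_congr_ae hg_eq, integral_add hind_int hF2_int]
    congr 1
    · rw [integral_const_mul, integral_indicator measurableSet_Iic, setIntegral_const,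
        smul_eq_mul, mul_one, measureReal_def, measure_Iic_eq M μ hμ hx0 hxM, cdf0]
    · rw [integral_integral_swap hF_int]
      refine setIntegral_congr_fun measurableSet_Ioc ?_
      intro t ht
      show (∫ ξ, F (ξ, t) ∂μ) = cdf0 μ t
      have hset : (fun ξ => F (ξ, t)) = Set.indicator (Set.Iic t) (fun _ => (1:ℝ)) := by
        funext ξ
        by_cases hξt : ξ ≤ t <;> simp [hF_def, Set.indicator_apply, hξt]
      rw [hset, integral_indicator measurableSet_Iic, setIntegral_const, smul_eq_mul, mul_one,
        measureReal_def, measure_Iic_eq M μ hμ ht.1.le (ht.2.trans hxM), cdf0]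
  rw [hstep1, hgval]

end SkiAux

open SkiAux Set in
/-- Sensitivity of the expected ski-rental cost in the distribution, for the Kolmogorov
and Wasserstein distances. -/
theorem ski_rental_cost_sensitivity
    (M b : ℝ) (hM : 0 < M) (hb : 0 < b)
    (μ ν : Measure ℝ) [IsProbabilityMeasure μ] [IsProbabilityMeasure ν]
    (hμ : μ (Set.Icc 0 M) = 1) (hν : ν (Set.Icc 0 M) = 1)
    (x : ℝ) (hx : x ∈ Set.Icc (0:ℝ) M) :
    (|skiCost b x μ - skiCost b x ν| ≤ (x + b) * kolDist μ ν ∧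
      |skiCost b x μ - skiCost b x ν| ≤ (M + b) * kolDist μ ν) ∧
    |skiCost b x μ - skiCost b x ν| ≤ b + wassDist M μ ν := by
  obtain ⟨hx0, hxM⟩ := hx
  -- integrability of cdfs on bounded intervals
  have hintμ : ∀ s : Set ℝ, MeasurableSet s → volume s ≠ ⊤ →
      ∀ κ : Measure ℝ, ∀ _ : IsProbabilityMeasure κ, IntegrableOn (cdf0 κ) s := by
    intro s hs hvol κ hκ
    have hconst : IntegrableOn (fun _ : ℝ => (1:ℝ)) s :=
      integrableOn_const hvol
    refine Integrable.mono' hconst (cdf0_measurable κ).aestronglyMeasurable ?_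
    filter_upwards with t
    rw [Real.norm_eq_abs, abs_of_nonneg (cdf0_nonneg κ t)]
    exact cdf0_le_one κ t
  have hIocvol : volume (Set.Ioc (0:ℝ) x) ≠ ⊤ := by
    rw [Real.volume_Ioc]; exact ENNReal.ofReal_ne_top
  have hIccvol : volume (Set.Icc (0:ℝ) M) ≠ ⊤ := by
    rw [Real.volume_Icc]; exact ENNReal.ofReal_ne_top
  have hμint := hintμ _ measurableSet_Ioc hIocvol μ ‹_›
  have hνint := hintμ _ measurableSet_Ioc hIocvol ν ‹_›
  have hdiff : skiCost b x μ - skiCost b x ν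
      = b * (cdf0 ν x - cdf0 μ x) + ∫ t in Set.Ioc (0:ℝ) x, (cdf0 ν t - cdf0 μ t) := by
    rw [ski_repr M b x hb hx0 hxM μ hμ, ski_repr M b x hb hx0 hxM ν hν,
      integral_sub hνint hμint]
    ring
  have habs : |skiCost b x μ - skiCost b x ν|
      ≤ b * |cdf0 μ x - cdf0 ν x| + ∫ t in Set.Ioc (0:ℝ) x, |cdf0 μ t - cdf0 ν t| := by
    rw [hdiff]
    refine (abs_add_le _ _).trans (add_le_add ?_ ?_)
    · rw [abs_mul, abs_of_pos hb, abs_sub_comm]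
    · have h1 : |∫ t in Set.Ioc (0:ℝ) x, (cdf0 ν t - cdf0 μ t)|
          ≤ ∫ t in Set.Ioc (0:ℝ) x, |cdf0 ν t - cdf0 μ t| := by
        simpa [Real.norm_eq_abs] using
          norm_integral_le_integral_norm (μ := volume.restrict (Set.Ioc (0:ℝ) x))
            (fun t => cdf0 ν t - cdf0 μ t)
      refine h1.trans (le_of_eq ?_)
      exact setIntegral_congr_fun measurableSet_Ioc fun t _ => abs_sub_comm _ _
  have habsintx : IntegrableOn (fun t => |cdf0 μ t - cdf0 ν t|) (Set.Ioc 0 x) :=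
    (hμint.sub hνint).abs
  have habsintM : IntegrableOn (fun t => |cdf0 μ t - cdf0 ν t|) (Set.Icc 0 M) :=
    ((hintμ _ measurableSet_Icc hIccvol μ ‹_›).sub (hintμ _ measurableSet_Icc hIccvol ν ‹_›)).abs
  have hconstx : IntegrableOn (fun _ : ℝ => kolDist μ ν) (Set.Ioc 0 x) :=
    integrableOn_const hIocvol
  have hkx : (∫ t in Set.Ioc (0:ℝ) x, |cdf0 μ t - cdf0 ν t|) ≤ x * kolDist μ ν := by
    have h1 : (∫ t in Set.Ioc (0:ℝ) x, |cdf0 μ t - cdf0 ν t|)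
        ≤ ∫ _t in Set.Ioc (0:ℝ) x, kolDist μ ν :=
      integral_mono habsintx hconstx (fun t => le_kolDist μ ν t)
    refine h1.trans (le_of_eq ?_)
    rw [setIntegral_const, measureReal_def, Real.volume_Ioc, smul_eq_mul, sub_zero, ENNReal.toReal_ofReal hx0]
  have hwx : (∫ t in Set.Ioc (0:ℝ) x, |cdf0 μ t - cdf0 ν t|) ≤ wassDist M μ ν := by
    refine setIntegral_mono_set habsintM ?_ ?_
    · filter_upwards with t; exact abs_nonneg _
    · exact HasSubset.Subset.eventuallyLE fun t ht => ⟨ht.1.le, ht.2.trans hxM⟩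
  have hK := le_kolDist μ ν x
  have hK0 := kolDist_nonneg μ ν
  have hbK : b * |cdf0 μ x - cdf0 ν x| ≤ b * kolDist μ ν :=
    mul_le_mul_of_nonneg_left hK hb.le
  have hone : b * |cdf0 μ x - cdf0 ν x| ≤ b :=
    (mul_le_mul_of_nonneg_left (abs_cdf0_sub_le_one μ ν x) hb.le).trans (by linarith)
  refine ⟨⟨?_, ?_⟩, ?_⟩
  · nlinarith [habs]
  · nlinarith [habs]
  · unfold wassDist at hwx ⊢
    nlinarith [habs]

end
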